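/- arXiv:2206.05166 — 3 statements merged into one kernel-verified Lean document; each statement's English description precedes it below -/
import Mathlib

section
/- Under the hypotheses of the certificate value identity — X_r = Σ_{ℓ=1}^L α_ℓ u w(r_ℓ)^H with ‖u‖₂ = 1 and nonzero α_ℓ, X_c = Σ_{q=1}^Q α'_q v w(c_q)^H with ‖v‖₂ = 1 and nonzero α'_q, y = B_r(X_r) + B_c(X_c), and q ∈ ℂ^D satisfying f_r(r_ℓ) = sign(α_ℓ)·u for all ℓ and f_c(c_q) = sign(α'_q)·v for all q — one has ⟨q, y⟩_ℝ ≥ ‖X_r‖_{A_r} + ‖X_c‖_{A_c}, where ‖·‖_{A_r} and ‖·‖_{A_c} are the atomic norms in ℂ^{K×D} and ℂ^{K'×D} respectively. -/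
open scoped BigOperators
open Matrix

noncomputable section

/-- Index set of size `D = Nr * M * P` with `M = 2N+1`, ordered as `p ⊗ d ⊗ b`. -/
abbrev Dix (Nr P N : ℕ) := Fin P × Fin (2 * N + 1) × Fin Nr

/-- Spatial steering vector `b(β) ∈ ℂ^{Nr}`, `b(β)[k] = exp(-2πi k β)`. -/
def bVec (Nr : ℕ) (β : ℝ) : Fin Nr → ℂ :=
  fun k => Complex.exp (-(2 * Real.pi * Complex.I * ((k : ℕ) : ℂ) * (β : ℂ)))

/-- Delay steering vector `d(τ) ∈ ℂ^{M}`, `M = 2N+1`, entries `exp(-2πi n τ)`, `n = -N,…,N`. -/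
def dVec (N : ℕ) (τ : ℝ) : Fin (2 * N + 1) → ℂ :=
  fun n => Complex.exp (-(2 * Real.pi * Complex.I * ((((n : ℕ) : ℤ) - (N : ℤ) : ℤ) : ℂ) * (τ : ℂ)))

/-- Doppler steering vector `p(ν) ∈ ℂ^{P}`, `p(ν)[p] = exp(-2πi p ν)`. -/
def pVec (P : ℕ) (ν : ℝ) : Fin P → ℂ :=
  fun p => Complex.exp (-(2 * Real.pi * Complex.I * ((p : ℕ) : ℂ) * (ν : ℂ)))

/-- `w(r) = p(ν) ⊗ d(τ) ⊗ b(β) ∈ ℂ^D`, for `r = (τ, ν, β)`. -/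
def wVec (Nr P N : ℕ) (r : ℝ × ℝ × ℝ) : Dix Nr P N → ℂ :=
  fun j => pVec P r.2.1 j.1 * dVec N r.1 j.2.1 * bVec Nr r.2.2 j.2.2

/-- The parameter cube `[0,1]^3`. -/
def cube : Set (ℝ × ℝ × ℝ) := Set.Icc ((0, 0, 0) : ℝ × ℝ × ℝ) (1, 1, 1)

/-- Euclidean (ℓ₂) norm of a complex vector. -/
def norm2 {ι : Type*} [Fintype ι] (u : ι → ℂ) : ℝ := Real.sqrt (∑ i, ‖u i‖ ^ 2)

/-- Atom `u w^H ∈ ℂ^{K×D}`. -/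
def atom {ι : Type*} (K : ℕ) (u : Fin K → ℂ) (w : ι → ℂ) : Matrix (Fin K) ι ℂ :=
  fun k j => u k * starRingEnd ℂ (w j)

/-- `sign(c) = c / |c|`. -/
def csign (c : ℂ) : ℂ := c / ((‖c‖ : ℝ) : ℂ)

/-- Atomic norm of `X ∈ ℂ^{K×D}` with respect to the atoms `u w(r)^H`. -/
def atomicNorm (Nr P N K : ℕ) (X : Matrix (Fin K) (Dix Nr P N) ℂ) : ℝ :=
  sInf { t | ∃ (L : ℕ) (α : Fin L → ℂ) (r : Fin L → ℝ × ℝ × ℝ) (u : Fin K → ℂ),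
    (∀ ℓ, r ℓ ∈ cube) ∧ norm2 u = 1 ∧
    X = ∑ ℓ, α ℓ • atom K u (wVec Nr P N (r ℓ)) ∧
    t = ∑ ℓ, ‖α ℓ‖ }

/-- Dual atomic norm `‖Y‖*_A = sup { |Tr(A^H Y)| : A an atom }`. -/
def dualAtomicNorm (Nr P N K : ℕ) (Y : Matrix (Fin K) (Dix Nr P N) ℂ) : ℝ :=
  sSup { t | ∃ (rr : ℝ × ℝ × ℝ) (u : Fin K → ℂ), rr ∈ cube ∧ norm2 u = 1 ∧
    t = ‖Matrix.trace ((atom K u (wVec Nr P N rr))ᴴ * Y)‖ }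

/-- `X` admits at least one atomic decomposition. -/
def hasAtomicDecomp (Nr P N K : ℕ) (X : Matrix (Fin K) (Dix Nr P N) ℂ) : Prop :=
  ∃ (L : ℕ) (α : Fin L → ℂ) (r : Fin L → ℝ × ℝ × ℝ) (u : Fin K → ℂ),
    (∀ ℓ, r ℓ ∈ cube) ∧ norm2 u = 1 ∧
    X = ∑ ℓ, α ℓ • atom K u (wVec Nr P N (r ℓ))

/-- The linear operator `B(X)[j] = Tr(G_j X)`. -/
def Bop {ι : Type*} [Fintype ι] {K : ℕ} (G : ι → Matrix ι (Fin K) ℂ)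
    (X : Matrix (Fin K) ι ℂ) : ι → ℂ := fun j => Matrix.trace (G j * X)

/-- The adjoint operator `B*(q) = Σ_j q[j] G_j^H`. -/
def Bstar {ι : Type*} [Fintype ι] {K : ℕ} (G : ι → Matrix ι (Fin K) ℂ)
    (q : ι → ℂ) : Matrix (Fin K) ι ℂ := ∑ j, q j • (G j)ᴴ

/-- Real inner product `⟨q, y⟩_ℝ = Re(y^H q)`. -/
def rInner {ι : Type*} [Fintype ι] (q y : ι → ℂ) : ℝ :=
  (∑ j, starRingEnd ℂ (y j) * q j).re


lemma sum4_comm {A B C D M : Type*} [Fintype A][Fintype B][Fintype C][Fintype D]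
    [AddCommMonoid M] (f : A → B → C → D → M) :
    ∑ a, ∑ b, ∑ c, ∑ d, f a b c d = ∑ d, ∑ c, ∑ b, ∑ a, f a b c d :=
  calc ∑ a, ∑ b, ∑ c, ∑ d, f a b c d
      = ∑ b, ∑ a, ∑ c, ∑ d, f a b c d := Finset.sum_comm
    _ = ∑ b, ∑ c, ∑ a, ∑ d, f a b c d :=
        Finset.sum_congr rfl fun _ _ => Finset.sum_comm
    _ = ∑ b, ∑ c, ∑ d, ∑ a, f a b c d :=
        Finset.sum_congr rfl fun _ _ => Finset.sum_congr rfl fun _ _ => Finset.sum_comm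
    _ = ∑ c, ∑ b, ∑ d, ∑ a, f a b c d := Finset.sum_comm
    _ = ∑ c, ∑ d, ∑ b, ∑ a, f a b c d :=
        Finset.sum_congr rfl fun _ _ => Finset.sum_comm
    _ = ∑ d, ∑ c, ∑ b, ∑ a, f a b c d := Finset.sum_comm

lemma key_sum_identity {ι : Type*} [Fintype ι] {K L : ℕ}
    (G : ι → Matrix ι (Fin K) ℂ) (q : ι → ℂ)
    (α : Fin L → ℂ) (w : Fin L → ι → ℂ) (u : Fin K → ℂ) :
    (∑ j, starRingEnd ℂ (Bop G (∑ ℓ, α ℓ • atom K u (w ℓ)) j) * q j)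
    = ∑ ℓ, starRingEnd ℂ (α ℓ) * (∑ k, starRingEnd ℂ (u k) * (Bstar G q *ᵥ w ℓ) k) := by
  simp only [Bop, Bstar, atom, Matrix.trace, Matrix.mul_apply, Matrix.diag_apply,
    Matrix.sum_apply, Matrix.smul_apply, smul_eq_mul, map_sum,
    Matrix.mulVec, dotProduct, Matrix.conjTranspose_apply, RingHom.map_mul,
    Complex.conj_conj, Finset.sum_mul, Finset.mul_sum]
  rw [sum4_comm]
  refine Finset.sum_congr rfl fun ℓ _ => Finset.sum_congr rfl fun k _ =>
    Finset.sum_congr rfl fun d _ => Finset.sum_congr rfl fun j _ => ?_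
  simp only [star_star, starRingEnd_apply]
  ring

lemma conj_mul_csign (a : ℂ) : starRingEnd ℂ a * csign a = ((‖a‖ : ℝ) : ℂ) := by
  rcases eq_or_ne a 0 with h | h
  · simp [csign, h]
  · have habs : ((‖a‖ : ℝ) : ℂ) ≠ 0 := by
      simpa using norm_ne_zero_iff.mpr h
    field_simp [csign]
    rw [csign, ← mul_div_assoc, mul_comm (starRingEnd ℂ a), Complex.mul_conj, Complex.normSq_eq_norm_sq, div_eq_iff habs]
    push_cast
    ring

lemma sum_conj_mul_self {ι : Type*} [Fintype ι] (u : ι → ℂ) (h : norm2 u = 1) :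
    ∑ k, starRingEnd ℂ (u k) * u k = 1 := by
  have h0 : (0:ℝ) ≤ ∑ i, ‖u i‖ ^ 2 :=
    Finset.sum_nonneg fun i _ => sq_nonneg _
  have hs : (∑ i, ‖u i‖ ^ 2) = 1 := by
    have := h
    unfold norm2 at this
    nlinarith [Real.sq_sqrt h0, Real.sqrt_nonneg (∑ i, ‖u i‖ ^ 2)]
  have heq : ∑ k, starRingEnd ℂ (u k) * u k = ((∑ i, ‖u i‖ ^ 2 : ℝ) : ℂ) := by
    push_cast
    refine Finset.sum_congr rfl fun k _ => ?_
    rw [mul_comm, Complex.mul_conj, Complex.normSq_eq_norm_sq]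
    push_cast
    ring
  rw [heq, hs]
  norm_num

lemma atomicNorm_le_sum (Nr P N K : ℕ) (X : Matrix (Fin K) (Dix Nr P N) ℂ)
    (L : ℕ) (α : Fin L → ℂ) (r : Fin L → ℝ × ℝ × ℝ) (u : Fin K → ℂ)
    (hr : ∀ ℓ, r ℓ ∈ cube) (hu : norm2 u = 1)
    (hX : X = ∑ ℓ, α ℓ • atom K u (wVec Nr P N (r ℓ))) :
    atomicNorm Nr P N K X ≤ ∑ ℓ, ‖α ℓ‖ := by
  refine csInf_le ⟨0, ?_⟩ ⟨L, α, r, u, hr, hu, hX, rfl⟩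
  rintro t ⟨L', α', r', u', -, -, -, rfl⟩
  exact Finset.sum_nonneg fun ℓ _ => norm_nonneg _

lemma cert_value {ι : Type*} [Fintype ι] {K L : ℕ}
    (G : ι → Matrix ι (Fin K) ℂ) (q : ι → ℂ)
    (α : Fin L → ℂ) (w : Fin L → ι → ℂ) (u : Fin K → ℂ) (hu : norm2 u = 1)
    (hcert : ∀ ℓ, Bstar G q *ᵥ w ℓ = csign (α ℓ) • u) :
    (∑ j, starRingEnd ℂ (Bop G (∑ ℓ, α ℓ • atom K u (w ℓ)) j) * q j)
      = ((∑ ℓ, ‖α ℓ‖ : ℝ) : ℂ) := by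
  rw [key_sum_identity]
  push_cast
  refine Finset.sum_congr rfl fun ℓ _ => ?_
  rw [hcert ℓ]
  have : ∑ k, starRingEnd ℂ (u k) * (csign (α ℓ) • u) k
      = csign (α ℓ) * ∑ k, starRingEnd ℂ (u k) * u k := by
    rw [Finset.mul_sum]
    refine Finset.sum_congr rfl fun k _ => ?_
    rw [Pi.smul_apply, smul_eq_mul]
    ring
  rw [this, sum_conj_mul_self u hu, mul_one, conj_mul_csign]

/-- **Lower bound on the dual objective.**  Under the certificate value identity
hypotheses, `⟨q, y⟩_ℝ ≥ ‖X_r‖_{A_r} + ‖X_c‖_{A_c}`. -/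
theorem dual_objective_lower_bound (Nr P N K K' : ℕ)
    (hNr : 0 < Nr) (hP : 0 < P) (hK : 0 < K) (hK' : 0 < K')
    (G : Dix Nr P N → Matrix (Dix Nr P N) (Fin K) ℂ)
    (A : Dix Nr P N → Matrix (Dix Nr P N) (Fin K') ℂ)
    (L : ℕ) (α : Fin L → ℂ) (r : Fin L → ℝ × ℝ × ℝ) (u : Fin K → ℂ)
    (hα : ∀ ℓ, α ℓ ≠ 0) (hr : ∀ ℓ, r ℓ ∈ cube) (hu : norm2 u = 1)
    (Q : ℕ) (α' : Fin Q → ℂ) (c : Fin Q → ℝ × ℝ × ℝ) (v : Fin K' → ℂ)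
    (hα' : ∀ qq, α' qq ≠ 0) (hc : ∀ qq, c qq ∈ cube) (hv : norm2 v = 1)
    (Xr : Matrix (Fin K) (Dix Nr P N) ℂ)
    (hXr : Xr = ∑ ℓ, α ℓ • atom K u (wVec Nr P N (r ℓ)))
    (Xc : Matrix (Fin K') (Dix Nr P N) ℂ)
    (hXc : Xc = ∑ qq, α' qq • atom K' v (wVec Nr P N (c qq)))
    (y : Dix Nr P N → ℂ)
    (hy : y = fun j => Bop G Xr j + Bop A Xc j)
    (q : Dix Nr P N → ℂ)
    (hfr : ∀ ℓ, Bstar G q *ᵥ wVec Nr P N (r ℓ) = csign (α ℓ) • u)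
    (hfc : ∀ qq, Bstar A q *ᵥ wVec Nr P N (c qq) = csign (α' qq) • v) :
    rInner q y ≥ atomicNorm Nr P N K Xr + atomicNorm Nr P N K' Xc := by
  have h1 : (∑ j, starRingEnd ℂ (Bop G Xr j) * q j) = ((∑ ℓ, ‖α ℓ‖ : ℝ) : ℂ) := by
    rw [hXr]; exact cert_value G q α (fun ℓ => wVec Nr P N (r ℓ)) u hu hfr
  have h2 : (∑ j, starRingEnd ℂ (Bop A Xc j) * q j) = ((∑ qq, ‖α' qq‖ : ℝ) : ℂ) := by
    rw [hXc]; exact cert_value A q α' (fun qq => wVec Nr P N (c qq)) v hv hfc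
  have hval : rInner q y = (∑ ℓ, ‖α ℓ‖) + (∑ qq, ‖α' qq‖) := by
    unfold rInner
    rw [hy]
    simp only [map_add, add_mul, Finset.sum_add_distrib, Complex.add_re]
    rw [h1, h2, Complex.ofReal_re, Complex.ofReal_re]
  rw [ge_iff_le, hval]
  exact add_le_add
    (atomicNorm_le_sum Nr P N K Xr L α r u hr hu hXr)
    (atomicNorm_le_sum Nr P N K' Xc Q α' c v hc hv hXc)
end
end

section
/- Suppose X = Σ_{ℓ=1}^L α_ℓ u w(r_ℓ)^H with α_ℓ ∈ ℂ \ {0}, ‖u‖₂ = 1, and there exists q ∈ ℂ^D such that the dual polynomial f(r) = B*(q) w(r) satisfies f(r_ℓ) = sign(α_ℓ)·u for every ℓ and ‖f(r)‖₂ ≤ 1 for every r ∈ [0,1]^3. Then the atomic norm of X is exactly achieved by this decomposition: ‖X‖_A = Σ_{ℓ=1}^L |α_ℓ|. -/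
open scoped BigOperators
open Matrix

noncomputable section

lemma sum_normSq_eq_one_of_norm2 {ι : Type*} [Fintype ι] {u : ι → ℂ} (hu : norm2 u = 1) :
    (∑ k, ‖u k‖ ^ 2) = 1 := by
  have h := hu
  rw [norm2] at h
  have hnn : (0:ℝ) ≤ ∑ k, ‖u k‖ ^ 2 := Finset.sum_nonneg fun _ _ => sq_nonneg _
  nlinarith [Real.sq_sqrt hnn]

lemma mul_conj_csign {a : ℂ} (ha : a ≠ 0) : a * starRingEnd ℂ (csign a) = ((‖a‖ : ℝ) : ℂ) := by
  have h : ((‖a‖ : ℝ) : ℂ) ≠ 0 := by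
    simpa using ha
  rw [csign, map_div₀, Complex.conj_ofReal, mul_div_assoc', Complex.mul_conj,
    Complex.normSq_eq_norm_sq]
  field_simp
  norm_cast

lemma cs_bound {K : ℕ} (v y : Fin K → ℂ) :
    ‖∑ k, v k * starRingEnd ℂ (y k)‖ ≤ norm2 v * norm2 y := by
  have h := norm_inner_le_norm (𝕜 := ℂ)
      ((WithLp.equiv 2 (Fin K → ℂ)).symm y) ((WithLp.equiv 2 (Fin K → ℂ)).symm v)
  rw [EuclideanSpace.norm_eq, EuclideanSpace.norm_eq] at h
  have hin : (inner ℂ ((WithLp.equiv 2 (Fin K → ℂ)).symm y) ((WithLp.equiv 2 (Fin K → ℂ)).symm v) : ℂ)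
      = ∑ k, v k * starRingEnd ℂ (y k) := by
    simp [PiLp.inner_apply, RCLike.inner_apply, mul_comm]
  rw [hin] at h
  simpa [norm2, mul_comm] using h

lemma F_decomp {K : ℕ} {ι : Type*} [Fintype ι] (Q : Matrix (Fin K) ι ℂ)
    {L : ℕ} (β : Fin L → ℂ) (v : Fin K → ℂ) (w : Fin L → ι → ℂ) :
    (∑ k, ∑ j, starRingEnd ℂ (Q k j) * (∑ m, β m • atom K v (w m)) k j)
      = ∑ m, β m * ∑ k, v k * starRingEnd ℂ ((Q *ᵥ w m) k) := by
  simp only [Matrix.sum_apply, Matrix.smul_apply, atom, smul_eq_mul, Matrix.mulVec,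
    dotProduct, map_sum, _root_.map_mul, Finset.mul_sum]
  refine (Finset.sum_congr rfl fun k _ => Finset.sum_comm).trans ?_
  refine Finset.sum_comm.trans ?_
  refine Finset.sum_congr rfl fun m _ => Finset.sum_congr rfl fun k _ => ?_
  refine Finset.sum_congr rfl fun j _ => ?_
  ring

/-- **Atomic norm attained by a certified decomposition.**
If `X = Σ_ℓ α_ℓ u w(r_ℓ)^H` with `‖u‖₂ = 1` and there is `q` whose dual polynomial
`f(r) = B*(q) w(r)` interpolates the signs (`f(r_ℓ) = sign(α_ℓ) u`) and satisfies
`‖f(r)‖₂ ≤ 1` on all of `[0,1]^3`, then `‖X‖_A = Σ_ℓ |α_ℓ|`. -/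
theorem atomic_norm_attained (Nr P N K : ℕ) (hNr : 0 < Nr) (hP : 0 < P) (hK : 0 < K)
    (G : Dix Nr P N → Matrix (Dix Nr P N) (Fin K) ℂ)
    (L : ℕ) (α : Fin L → ℂ) (r : Fin L → ℝ × ℝ × ℝ) (u : Fin K → ℂ)
    (hα : ∀ ℓ, α ℓ ≠ 0) (hr : ∀ ℓ, r ℓ ∈ cube) (hu : norm2 u = 1)
    (X : Matrix (Fin K) (Dix Nr P N) ℂ)
    (hX : X = ∑ ℓ, α ℓ • atom K u (wVec Nr P N (r ℓ)))
    (hcert : ∃ q : Dix Nr P N → ℂ,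
      (∀ ℓ, Bstar G q *ᵥ wVec Nr P N (r ℓ) = csign (α ℓ) • u) ∧
      (∀ rr ∈ cube, norm2 (Bstar G q *ᵥ wVec Nr P N rr) ≤ 1)) :
    atomicNorm Nr P N K X = ∑ ℓ, ‖α ℓ‖ := by
  obtain ⟨q, hq1, hq2⟩ := hcert
  set Q : Matrix (Fin K) (Dix Nr P N) ℂ := Bstar G q with hQ
  set t₀ : ℝ := ∑ ℓ, ‖α ℓ‖ with ht₀
  have hu1 : (∑ k, ‖u k‖ ^ 2) = 1 := sum_normSq_eq_one_of_norm2 hu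
  have hFX : (∑ k, ∑ j, starRingEnd ℂ (Q k j) * X k j) = (t₀ : ℂ) := by
    rw [hX, F_decomp]
    have hc : ∀ ℓ, (∑ k, u k * starRingEnd ℂ ((Q *ᵥ wVec Nr P N (r ℓ)) k))
        = starRingEnd ℂ (csign (α ℓ)) := by
      intro ℓ
      rw [hq1 ℓ]
      simp only [Pi.smul_apply, smul_eq_mul, _root_.map_mul]
      have hpt : ∀ k, u k * (starRingEnd ℂ (csign (α ℓ)) * starRingEnd ℂ (u k))
          = starRingEnd ℂ (csign (α ℓ)) * ((‖u k‖ ^ 2 : ℝ) : ℂ) := by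
        intro k
        rw [show u k * (starRingEnd ℂ (csign (α ℓ)) * starRingEnd ℂ (u k))
            = starRingEnd ℂ (csign (α ℓ)) * (u k * starRingEnd ℂ (u k)) by ring,
          Complex.mul_conj, Complex.normSq_eq_norm_sq]
      simp only [hpt, ← Finset.mul_sum]
      rw [show (∑ k, ((‖u k‖ ^ 2 : ℝ) : ℂ)) = ((∑ k, ‖u k‖ ^ 2 : ℝ) : ℂ) by push_cast; ring]
      rw [hu1]
      simp
    rw [ht₀]
    push_cast
    refine Finset.sum_congr rfl fun ℓ _ => ?_
    rw [hc ℓ, mul_conj_csign (hα ℓ)]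
  have hlb : ∀ t ∈ { t | ∃ (L' : ℕ) (β : Fin L' → ℂ) (s : Fin L' → ℝ × ℝ × ℝ) (v : Fin K → ℂ),
      (∀ m, s m ∈ cube) ∧ norm2 v = 1 ∧
      X = ∑ m, β m • atom K v (wVec Nr P N (s m)) ∧
      t = ∑ m, ‖β m‖ }, t₀ ≤ t := by
    rintro t ⟨L', β, s, v, hs, hv, hXd, rfl⟩
    have hFXd : (∑ k, ∑ j, starRingEnd ℂ (Q k j) * X k j)
        = ∑ m, β m * ∑ k, v k * starRingEnd ℂ ((Q *ᵥ wVec Nr P N (s m)) k) := by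
      rw [hXd, F_decomp]
    have hre : t₀ = (∑ m, β m * ∑ k, v k * starRingEnd ℂ ((Q *ᵥ wVec Nr P N (s m)) k)).re := by
      rw [← hFXd, hFX, Complex.ofReal_re]
    rw [hre]
    calc (∑ m, β m * ∑ k, v k * starRingEnd ℂ ((Q *ᵥ wVec Nr P N (s m)) k)).re
        ≤ ‖∑ m, β m * ∑ k, v k * starRingEnd ℂ ((Q *ᵥ wVec Nr P N (s m)) k)‖ :=
          Complex.re_le_norm _
      _ ≤ ∑ m, ‖β m * ∑ k, v k * starRingEnd ℂ ((Q *ᵥ wVec Nr P N (s m)) k)‖ :=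
          norm_sum_le _ _
      _ ≤ ∑ m, ‖β m‖ := by
          refine Finset.sum_le_sum fun m _ => ?_
          rw [norm_mul]
          have h1 : ‖∑ k, v k * starRingEnd ℂ ((Q *ᵥ wVec Nr P N (s m)) k)‖ ≤ 1 := by
            calc ‖∑ k, v k * starRingEnd ℂ ((Q *ᵥ wVec Nr P N (s m)) k)‖
                ≤ norm2 v * norm2 (Q *ᵥ wVec Nr P N (s m)) := cs_bound _ _
              _ ≤ 1 * 1 :=
                  mul_le_mul (le_of_eq hv) (hq2 _ (hs m)) (Real.sqrt_nonneg _) zero_le_one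
              _ = 1 := by ring
          calc ‖β m‖ *
                ‖∑ k, v k * starRingEnd ℂ ((Q *ᵥ wVec Nr P N (s m)) k)‖
              ≤ ‖β m‖ * 1 :=
                mul_le_mul_of_nonneg_left h1 (norm_nonneg _)
            _ = ‖β m‖ := mul_one _
  have hmem : t₀ ∈ { t | ∃ (L' : ℕ) (β : Fin L' → ℂ) (s : Fin L' → ℝ × ℝ × ℝ) (v : Fin K → ℂ),
      (∀ m, s m ∈ cube) ∧ norm2 v = 1 ∧
      X = ∑ m, β m • atom K v (wVec Nr P N (s m)) ∧
      t₀ = ∑ m, ‖β m‖ } := ⟨L, α, r, u, hr, hu, hX, rfl⟩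
  rw [atomicNorm]
  exact le_antisymm (csInf_le ⟨t₀, hlb⟩ hmem) (le_csInf ⟨t₀, hmem⟩ hlb)
end
end

section
/- (Bounded-real sufficiency for the SDP constraints) Let Q ∈ ℂ^{D×D} and R ∈ ℂ^{K×D}, D = N_r·M·P, be such that (i) the block matrix [[Q, R^H], [R, I_K]] is positive semidefinite, and (ii) Tr(Θ_𝐧 Q) = δ_𝐧 for every multi-index 𝐧 = (n₁, n₂, n₃) with |n₁| ≤ P−1, |n₂| ≤ M−1, |n₃| ≤ N_r−1, where Θ_𝐧 = Θ_{n₁}^{(P)} ⊗ Θ_{n₂}^{(M)} ⊗ Θ_{n₃}^{(N_r)} and δ_𝐧 = 1 iff 𝐧 = (0,0,0). Then the vector-valued trigonometric polynomial r ↦ R w(r) ∈ ℂ^K satisfies ‖R w(r)‖₂ ≤ 1 for every r ∈ [0,1]^3. -/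
open scoped BigOperators ComplexOrder
open Matrix

noncomputable section

/-- Elementary Toeplitz matrix `Θ_n^{(d)}`: ones on the `n`-th diagonal (`(k,l)` entry is
`1` if `k − l = n`, else `0`). -/
def theta (d : ℕ) (n : ℤ) : Matrix (Fin d) (Fin d) ℂ :=
  fun k l => if ((k : ℕ) : ℤ) - ((l : ℕ) : ℤ) = n then 1 else 0

/-- `Θ_𝐧 = Θ_{n₁}^{(P)} ⊗ Θ_{n₂}^{(M)} ⊗ Θ_{n₃}^{(N_r)}` on the product index set. -/
def thetaKron (Nr P N : ℕ) (n₁ n₂ n₃ : ℤ) :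
    Matrix (Dix Nr P N) (Dix Nr P N) ℂ :=
  fun j j' => theta P n₁ j.1 j'.1 * theta (2 * N + 1) n₂ j.2.1 j'.2.1 * theta Nr n₃ j.2.2 j'.2.2


lemma thetaKron_indicator (Nr P N : ℕ) (n : ℤ × ℤ × ℤ) (j j' : Dix Nr P N) :
    thetaKron Nr P N n.1 n.2.1 n.2.2 j j'
      = if n = (((j.1 : ℕ) : ℤ) - ((j'.1 : ℕ) : ℤ),
                ((j.2.1 : ℕ) : ℤ) - ((j'.2.1 : ℕ) : ℤ),
                ((j.2.2 : ℕ) : ℤ) - ((j'.2.2 : ℕ) : ℤ)) then 1 else 0 := by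
  obtain ⟨a, b, c⟩ := n
  simp only [thetaKron, theta, Prod.mk.injEq]
  split_ifs with h1 h2 h3 h4 h5 h6 h7 <;> simp_all <;> tauto

/-- **Bounded-real sufficiency for the SDP constraints.**  If the block matrix
`[[Q, R^H], [R, I_K]]` is positive semidefinite and `Tr(Θ_𝐧 Q) = δ_𝐧` for all
multi-indices `𝐧` in range, then `‖R w(r)‖₂ ≤ 1` for every `r ∈ [0,1]^3`. -/
theorem bounded_real_sufficiency (Nr P N K : ℕ) (hNr : 0 < Nr) (hP : 0 < P) (hK : 0 < K)
    (Q : Matrix (Dix Nr P N) (Dix Nr P N) ℂ)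
    (R : Matrix (Fin K) (Dix Nr P N) ℂ)
    (hPSD : (Matrix.fromBlocks Q Rᴴ R (1 : Matrix (Fin K) (Fin K) ℂ)).PosSemidef)
    (hQ : ∀ n₁ n₂ n₃ : ℤ, |n₁| ≤ (P : ℤ) - 1 → |n₂| ≤ (2 * N + 1 : ℤ) - 1 →
      |n₃| ≤ (Nr : ℤ) - 1 →
      Matrix.trace (thetaKron Nr P N n₁ n₂ n₃ * Q)
        = if n₁ = 0 ∧ n₂ = 0 ∧ n₃ = 0 then 1 else 0) :
    ∀ rr ∈ cube, norm2 (R *ᵥ wVec Nr P N rr) ≤ 1 := by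
  classical
  intro rr _
  obtain ⟨τ, ν, β⟩ := rr
  set w : Dix Nr P N → ℂ := wVec Nr P N (τ, ν, β) with hw
  set ph : ℤ × ℤ × ℤ → ℂ := fun n =>
    Complex.exp (-(2 * Real.pi * Complex.I *
      ((n.1 : ℂ) * (ν : ℂ) + (n.2.1 : ℂ) * (τ : ℂ) + (n.2.2 : ℂ) * (β : ℂ)))) with hph
  set box : Finset (ℤ × ℤ × ℤ) :=
    (Finset.Icc (-((P : ℤ) - 1)) ((P : ℤ) - 1)) ×ˢ
    ((Finset.Icc (-((2 * N + 1 : ℤ) - 1)) ((2 * N + 1 : ℤ) - 1)) ×ˢ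
     (Finset.Icc (-((Nr : ℤ) - 1)) ((Nr : ℤ) - 1))) with hbox
  have hmem : ∀ n : ℤ × ℤ × ℤ, n ∈ box ↔
      (-((P : ℤ) - 1) ≤ n.1 ∧ n.1 ≤ (P : ℤ) - 1) ∧
      (-((2 * N + 1 : ℤ) - 1) ≤ n.2.1 ∧ n.2.1 ≤ (2 * N + 1 : ℤ) - 1) ∧
      (-((Nr : ℤ) - 1) ≤ n.2.2 ∧ n.2.2 ≤ (Nr : ℤ) - 1) := by
    intro n
    simp [hbox, Finset.mem_product, Finset.mem_Icc, and_assoc]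
  have hTheta := thetaKron_indicator Nr P N
  -- phase of a difference equals conj(w j') * w j
  have hphase : ∀ j j' : Dix Nr P N,
      ph (((j.1 : ℕ) : ℤ) - ((j'.1 : ℕ) : ℤ),
          ((j.2.1 : ℕ) : ℤ) - ((j'.2.1 : ℕ) : ℤ),
          ((j.2.2 : ℕ) : ℤ) - ((j'.2.2 : ℕ) : ℤ))
        = starRingEnd ℂ (w j') * w j := by
    intro j j'
    rw [hw]
    simp only [hph, wVec, pVec, dVec, bVec]
    rw [_root_.map_mul, _root_.map_mul, ← Complex.exp_conj, ← Complex.exp_conj,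
      ← Complex.exp_conj]
    simp only [map_neg, _root_.map_mul, Complex.conj_I, Complex.conj_ofReal, map_ofNat,
      map_intCast, map_natCast]
    rw [← Complex.exp_add, ← Complex.exp_add, ← Complex.exp_add, ← Complex.exp_add,
      ← Complex.exp_add]
    congr 1
    push_cast
    ring
  -- key identity : wᴴ Q w = 1
  have key : star w ⬝ᵥ (Q *ᵥ w) = 1 := by
    have h1 : ∑ n ∈ box, ph n *
        Matrix.trace (thetaKron Nr P N n.1 n.2.1 n.2.2 * Q) = star w ⬝ᵥ (Q *ᵥ w) := by
      have htr : ∀ n : ℤ × ℤ × ℤ,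
          Matrix.trace (thetaKron Nr P N n.1 n.2.1 n.2.2 * Q)
            = ∑ j : Dix Nr P N, ∑ j' : Dix Nr P N,
                thetaKron Nr P N n.1 n.2.1 n.2.2 j j' * Q j' j := by
        intro n
        simp [Matrix.trace, Matrix.mul_apply, Matrix.diag]
      calc ∑ n ∈ box, ph n * Matrix.trace (thetaKron Nr P N n.1 n.2.1 n.2.2 * Q)
          = ∑ j : Dix Nr P N, ∑ j' : Dix Nr P N,
              (∑ n ∈ box, ph n * thetaKron Nr P N n.1 n.2.1 n.2.2 j j') * Q j' j := by
            simp_rw [htr, Finset.mul_sum, Finset.sum_mul]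
            rw [Finset.sum_comm]
            refine Finset.sum_congr rfl fun j _ => ?_
            rw [Finset.sum_comm]
            exact Finset.sum_congr rfl fun j' _ =>
              Finset.sum_congr rfl fun n _ => by ring
        _ = ∑ j : Dix Nr P N, ∑ j' : Dix Nr P N,
              (starRingEnd ℂ (w j') * w j) * Q j' j := by
            refine Finset.sum_congr rfl fun j _ => Finset.sum_congr rfl fun j' _ => ?_
            congr 1
            have hin : (((j.1 : ℕ) : ℤ) - ((j'.1 : ℕ) : ℤ),
                ((j.2.1 : ℕ) : ℤ) - ((j'.2.1 : ℕ) : ℤ),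
                ((j.2.2 : ℕ) : ℤ) - ((j'.2.2 : ℕ) : ℤ)) ∈ box := by
              rw [hmem]
              have := j.1.isLt; have := j'.1.isLt
              have := j.2.1.isLt; have := j'.2.1.isLt
              have := j.2.2.isLt; have := j'.2.2.isLt
              refine ⟨⟨?_, ?_⟩, ⟨?_, ?_⟩, ⟨?_, ?_⟩⟩ <;> simp <;> omega
            calc ∑ n ∈ box, ph n * thetaKron Nr P N n.1 n.2.1 n.2.2 j j'
                = ∑ n ∈ box, if n = (((j.1 : ℕ) : ℤ) - ((j'.1 : ℕ) : ℤ),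
                      ((j.2.1 : ℕ) : ℤ) - ((j'.2.1 : ℕ) : ℤ),
                      ((j.2.2 : ℕ) : ℤ) - ((j'.2.2 : ℕ) : ℤ)) then ph n else 0 := by
                  refine Finset.sum_congr rfl fun n _ => ?_
                  rw [hTheta]
                  split_ifs <;> simp
              _ = starRingEnd ℂ (w j') * w j := by
                  rw [Finset.sum_ite_eq' box _ ph, if_pos hin, hphase]
        _ = star w ⬝ᵥ (Q *ᵥ w) := by
            rw [Finset.sum_comm]
            simp only [dotProduct, Matrix.mulVec, Pi.star_apply, RCLike.star_def,
              Finset.mul_sum]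
            refine Finset.sum_congr rfl fun j _ => Finset.sum_congr rfl fun j' _ => ?_
            ring
    rw [← h1]
    have h2 : ∀ n ∈ box, ph n * Matrix.trace (thetaKron Nr P N n.1 n.2.1 n.2.2 * Q)
        = if n = ((0 : ℤ), (0 : ℤ), (0 : ℤ)) then 1 else 0 := by
      intro n hn
      rw [hmem] at hn
      rw [hQ n.1 n.2.1 n.2.2 (abs_le.2 ⟨by omega, hn.1.2⟩)
        (abs_le.2 ⟨by omega, hn.2.1.2⟩) (abs_le.2 ⟨by omega, hn.2.2.2⟩)]
      by_cases h : n = ((0 : ℤ), (0 : ℤ), (0 : ℤ))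
      · subst h
        simp [hph]
      · rw [if_neg, mul_zero, if_neg h]
        intro hc
        exact h (by obtain ⟨n1, n2, n3⟩ := n; simp_all)
    rw [Finset.sum_congr rfl h2, Finset.sum_ite_eq' box ((0 : ℤ), (0 : ℤ), (0 : ℤ)) (fun _ => 1),
      if_pos]
    rw [hmem]
    refine ⟨⟨?_, ?_⟩, ⟨?_, ?_⟩, ⟨?_, ?_⟩⟩ <;> simp <;> omega
  -- use PSD
  set u : Fin K → ℂ := R *ᵥ w with hu
  have hx := hPSD.dotProduct_mulVec_nonneg (Sum.elim w (-u))
  have hcomp : star (Sum.elim w (-u)) ⬝ᵥ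
      ((Matrix.fromBlocks Q Rᴴ R (1 : Matrix (Fin K) (Fin K) ℂ)) *ᵥ Sum.elim w (-u))
      = 1 - star u ⬝ᵥ u := by
    rw [Matrix.fromBlocks_mulVec]
    have e1 : (Sum.elim w (-u)) ∘ Sum.inl = w := rfl
    have e2 : (Sum.elim w (-u)) ∘ Sum.inr = -u := rfl
    rw [e1, e2]
    have e3 : star (Sum.elim w (-u)) = Sum.elim (star w) (star (-u)) := by
      funext i; cases i <;> rfl
    rw [e3, sumElim_dotProduct_sumElim]
    have hRu : star w ⬝ᵥ (Rᴴ *ᵥ (-u)) = -(star u ⬝ᵥ u) := by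
      rw [Matrix.mulVec_neg, dotProduct_neg, Matrix.dotProduct_mulVec,
        ← Matrix.star_mulVec, ← hu]
    rw [dotProduct_add, dotProduct_add, hRu, Matrix.one_mulVec, ← hu, key]
    have h4 : star (-u) ⬝ᵥ u = -(star u ⬝ᵥ u) := by
      simp [dotProduct]
    have h5 : star (-u) ⬝ᵥ (-u) = star u ⬝ᵥ u := by
      simp [dotProduct]
    rw [h4, h5]
    ring
  rw [hcomp] at hx
  have hsum : star u ⬝ᵥ u = ((∑ k, ‖u k‖ ^ 2 : ℝ) : ℂ) := by
    simp only [dotProduct, Pi.star_apply, RCLike.star_def]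
    push_cast
    refine Finset.sum_congr rfl fun k _ => ?_
    rw [Complex.conj_mul']
  rw [hsum] at hx
  have hre : (∑ k, ‖u k‖ ^ 2 : ℝ) ≤ 1 := by
    have h6 := (Complex.le_def.1 hx).1
    rw [Complex.zero_re, Complex.sub_re, Complex.one_re, Complex.ofReal_re] at h6
    linarith
  rw [norm2]
  exact Real.sqrt_le_one.2 hre
end
end
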